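/- Let S be an additive abelian group and set S⁰ = {α ∈ S : 2α = 0}. The linear map π : L_S → gl_S determined by π(L_{α,β}) = E_{α+β, β−α} is an algebra homomorphism (π(a·b) = π(a)·π(b)); it intertwines the translation actions, π ∘ σ_γ = σ'_γ ∘ π for all γ ∈ S, where σ_γ(L_{α,β}) = L_{α,β+γ} and σ'_γ(E_{α,β}) = E_{α+γ,β+γ}; and it satisfies π ∘ τ = τ' ∘ π, where τ(L_{α,β}) = −L_{−α,β} and τ'(E_{α,β}) = −E_{β,α}. If S⁰ = {0}, then π is injective and preserves the bilinear forms: ⟨π(a), π(b)⟩ = ⟨a, b⟩. If in addition 2S = S (in particular whenever S is finite of odd order), then π is bijective, hence an algebra isomorphism. -/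

import Mathlib

open scoped Classical

/-- The underlying vector space of `L_S`: finitely supported functions on `S × S`,
with standard basis `{L_{α,β} : α, β ∈ S}`. -/
abbrev LSpace (S : Type*) := (S × S) →₀ ℂ

/-- The basis element `L_{α,β}`. -/
noncomputable def Lgen {S : Type*} (α β : S) : LSpace S := Finsupp.single (α, β) 1

/-- The product of two basis elements:
`L_{α,β} · L_{μ,ν} = δ_{α+μ, β−ν} · L_{α+μ, α+ν}`. -/
noncomputable def LmulBasis {S : Type*} [AddCommGroup S] (p q : S × S) : LSpace S :=
  if p.1 + q.1 = p.2 - q.2 then Finsupp.single (p.1 + q.1, p.1 + q.2) 1 else 0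

/-- The bilinear product on `L_S` determined by its values on basis elements. -/
noncomputable def Lmul {S : Type*} [AddCommGroup S] (a b : LSpace S) : LSpace S :=
  a.sum fun p x => b.sum fun q y => (x * y) • LmulBasis p q

/-- The value of the bilinear form on two basis elements:
`⟨L_{α,β}, L_{μ,ν}⟩ = δ_{α+μ,0} · δ_{β,ν}`. -/
noncomputable def LformBasis {S : Type*} [AddCommGroup S] (p q : S × S) : ℂ :=
  if p.1 + q.1 = 0 ∧ p.2 = q.2 then 1 else 0

/-- The bilinear form on `L_S` determined by its values on basis elements. -/
noncomputable def Lform {S : Type*} [AddCommGroup S] (a b : LSpace S) : ℂ :=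
  a.sum fun p x => b.sum fun q y => x * y * LformBasis p q


/-- The translation map `σ_γ : L_S → L_S`, `σ_γ(L_{α,β}) = L_{α,β+γ}`. -/
noncomputable def sigmaL {S : Type*} [AddCommGroup S] (γ : S) (a : LSpace S) : LSpace S :=
  a.sum fun p x => Finsupp.single (p.1, p.2 + γ) x

/-- The Lie algebra automorphism `τ` of `L_S`: `τ(L_{α,β}) = −L_{−α,β}`. -/
noncomputable def tauL {S : Type*} [AddCommGroup S] (a : LSpace S) : LSpace S :=
  a.sum fun p x => Finsupp.single (-p.1, p.2) (-x)

/-- The underlying vector space of `gl_S`: finitely supported functions on `S × S`,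
with standard basis `{E_{α,β} : α, β ∈ S}`. -/
abbrev GlSpace (S : Type*) := (S × S) →₀ ℂ

/-- Matrix product of two basis elements: `E_{α,β} · E_{μ,ν} = δ_{β,μ} · E_{α,ν}`. -/
noncomputable def GlmulBasis {S : Type*} (p q : S × S) : GlSpace S :=
  if p.2 = q.1 then Finsupp.single (p.1, q.2) 1 else 0

/-- The bilinear matrix product on `gl_S`. -/
noncomputable def Glmul {S : Type*} (a b : GlSpace S) : GlSpace S :=
  a.sum fun p x => b.sum fun q y => (x * y) • GlmulBasis p q

/-- The bilinear form on `gl_S`: `⟨E_{α,β}, E_{μ,ν}⟩ = δ_{α,ν} · δ_{β,μ}`. -/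
noncomputable def Glform {S : Type*} (a b : GlSpace S) : ℂ :=
  a.sum fun p x => b.sum fun q y => x * y * (if p.1 = q.2 ∧ p.2 = q.1 then 1 else 0)

/-- The translation map `σ'_γ : gl_S → gl_S`, `σ'_γ(E_{α,β}) = E_{α+γ,β+γ}`. -/
noncomputable def sigmaGl {S : Type*} [AddCommGroup S] (γ : S) (a : GlSpace S) : GlSpace S :=
  a.sum fun p x => Finsupp.single (p.1 + γ, p.2 + γ) x

/-- The map `τ' : gl_S → gl_S`, `τ'(E_{α,β}) = −E_{β,α}`. -/
noncomputable def tauGl {S : Type*} (a : GlSpace S) : GlSpace S :=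
  a.sum fun p x => Finsupp.single (p.2, p.1) (-x)

/-- The linear map `π : L_S → gl_S`, `π(L_{α,β}) = E_{α+β, β−α}`. -/
noncomputable def piLGl {S : Type*} [AddCommGroup S] (a : LSpace S) : GlSpace S :=
  a.sum fun p x => Finsupp.single (p.1 + p.2, p.2 - p.1) x

section aux

variable {S : Type*} [AddCommGroup S]

/-- index map underlying `piLGl` -/
def fMap (p : S × S) : S × S := (p.1 + p.2, p.2 - p.1)

lemma piLGl_eq_mapDomain (a : LSpace S) : piLGl a = Finsupp.mapDomain fMap a := rfl

lemma piLGl_eq_lmap (a : LSpace S) :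
    piLGl a = Finsupp.lmapDomain ℂ ℂ (fMap (S := S)) a := rfl

lemma fMap_injective (h0 : ∀ α : S, α + α = 0 → α = 0) :
    Function.Injective (fMap (S := S)) := by
  rintro ⟨p1, p2⟩ ⟨q1, q2⟩ h
  simp only [fMap, Prod.mk.injEq] at h
  obtain ⟨h1, h2⟩ := h
  have h3 : (p2 - q2) + (p2 - q2) = 0 := by
    have := congrArg₂ (· + ·) h1 h2
    abel_nf at this ⊢
    linear_combination (norm := abel_nf) this
  have h4 : p2 = q2 := by
    have := h0 _ h3; rwa [sub_eq_zero] at this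
  subst h4
  have : p1 = q1 := by
    have := h1
    abel_nf at this
    linear_combination (norm := abel_nf) this
  simp [this]

lemma fMap_surjective (h2 : ∀ α : S, ∃ β : S, β + β = α) :
    Function.Surjective (fMap (S := S)) := by
  rintro ⟨u, v⟩
  obtain ⟨β, hβ⟩ := h2 (u - v)
  refine ⟨(β, u - β), ?_⟩
  simp only [fMap, Prod.mk.injEq]
  exact ⟨by abel, by linear_combination (norm := abel_nf) -hβ⟩

lemma mapDomain_LmulBasis (p q : S × S) :
    Finsupp.mapDomain fMap (LmulBasis p q) = GlmulBasis (fMap p) (fMap q) := by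
  rcases p with ⟨p1, p2⟩; rcases q with ⟨q1, q2⟩
  simp only [LmulBasis, GlmulBasis, fMap]
  by_cases h : p1 + q1 = p2 - q2
  · erw [if_pos h, Finsupp.mapDomain_single,
      if_pos (show p2 - p1 = q1 + q2 by linear_combination (norm := abel_nf) -h)]
    have he : (fMap ((p1 + q1, p1 + q2) : S × S)) = ((p1 + p2, q2 - q1) : S × S) := by
      simp only [fMap, Prod.mk.injEq]
      exact ⟨by linear_combination (norm := abel_nf) h, by abel⟩
    rw [he]
  · erw [if_neg h, Finsupp.mapDomain_zero, if_neg]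
    intro hc
    exact h (by linear_combination (norm := abel_nf) -hc)

end aux

theorem stmt8 {S : Type*} [AddCommGroup S] :
    -- π is an algebra homomorphism
    (∀ a b : LSpace S, piLGl (Lmul a b) = Glmul (piLGl a) (piLGl b)) ∧
    -- π intertwines the translation actions
    (∀ (γ : S) (a : LSpace S), piLGl (sigmaL γ a) = sigmaGl γ (piLGl a)) ∧
    -- π ∘ τ = τ' ∘ π
    (∀ a : LSpace S, piLGl (tauL a) = tauGl (piLGl a)) ∧
    -- if S⁰ = 0 then π is injective and preserves the bilinear forms
    ((∀ α : S, α + α = 0 → α = 0) →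
      Function.Injective (piLGl (S := S)) ∧
      ∀ a b : LSpace S, Glform (piLGl a) (piLGl b) = Lform a b) ∧
    -- if moreover 2S = S, then π is an algebra isomorphism
    ((∀ α : S, α + α = 0 → α = 0) → (∀ α : S, ∃ β : S, β + β = α) →
      Function.Bijective (piLGl (S := S))) ∧
    -- in particular, π is bijective whenever S is finite of odd order
    (Finite S → Odd (Nat.card S) → Function.Bijective (piLGl (S := S))) := by
  have hbij : (∀ α : S, α + α = 0 → α = 0) → (∀ α : S, ∃ β : S, β + β = α) →
      Function.Bijective (piLGl (S := S)) := by
    intro h0 h2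
    constructor
    · intro a b hab
      rw [piLGl_eq_mapDomain, piLGl_eq_mapDomain] at hab
      exact Finsupp.mapDomain_injective (fMap_injective h0) hab
    · intro g
      set e := Equiv.ofBijective (fMap (S := S)) ⟨fMap_injective h0, fMap_surjective h2⟩ with he
      refine ⟨Finsupp.mapDomain e.symm g, ?_⟩
      rw [piLGl_eq_mapDomain, ← Finsupp.mapDomain_comp]
      have : (fMap (S := S)) ∘ e.symm = id := by
        funext x
        simp only [Function.comp_apply, id_eq]
        exact e.apply_symm_apply x
      rw [this, Finsupp.mapDomain_id]
  refine ⟨?_, ?_, ?_, ?_, hbij, ?_⟩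
  · -- homomorphism
    intro a b
    rw [piLGl_eq_lmap]
    show (Finsupp.lmapDomain ℂ ℂ (fMap (S := S)))
      (a.sum fun p x => b.sum fun q y => (x * y) • LmulBasis p q) = _
    rw [map_finsuppSum]
    have lhs : (a.sum fun p x => (Finsupp.lmapDomain ℂ ℂ (fMap (S := S)))
        (b.sum fun q y => (x * y) • LmulBasis p q)) =
        a.sum fun p x => b.sum fun q y => (x * y) • GlmulBasis (fMap p) (fMap q) := by
      refine Finsupp.sum_congr fun p _ => ?_
      rw [map_finsuppSum]
      refine Finsupp.sum_congr fun q _ => ?_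
      rw [map_smul]
      congr 1
      exact mapDomain_LmulBasis p q
    rw [lhs]
    show _ = (Finsupp.mapDomain fMap a).sum fun p x =>
      (Finsupp.mapDomain fMap b).sum fun q y => (x * y) • GlmulBasis p q
    rw [Finsupp.sum_mapDomain_index
      (fun p => by simp [Finsupp.sum_fun_zero])
      (fun p x₁ x₂ => by
        rw [← Finsupp.sum_add]
        refine Finsupp.sum_congr fun q _ => ?_
        rw [add_mul, add_smul])]
    refine Finsupp.sum_congr fun p _ => ?_
    rw [Finsupp.sum_mapDomain_index
      (fun q => by simp)
      (fun q y₁ y₂ => by rw [mul_add, add_smul])]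
  · -- translations
    intro γ a
    have h1 : sigmaL γ a = Finsupp.mapDomain (fun p : S × S => (p.1, p.2 + γ)) a := rfl
    have h2 : sigmaGl γ (piLGl a) =
        Finsupp.mapDomain (fun p : S × S => (p.1 + γ, p.2 + γ)) (Finsupp.mapDomain fMap a) := rfl
    rw [piLGl_eq_mapDomain, h1, h2, ← Finsupp.mapDomain_comp, ← Finsupp.mapDomain_comp]
    congr 1
    funext p
    simp only [Function.comp_apply, fMap, Prod.mk.injEq]
    constructor <;> abel
  · -- tau
    intro a
    have h1 : tauL a = Finsupp.mapDomain (fun p : S × S => (-p.1, p.2)) (-a) := by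
      show (a.sum fun p x => Finsupp.single (-p.1, p.2) (-x)) =
        ((-a).sum fun p x => Finsupp.single (-p.1, p.2) x)
      rw [Finsupp.sum_neg_index (fun p => Finsupp.single_zero _)]
    have h2 : tauGl (piLGl a) =
        Finsupp.mapDomain (fun p : S × S => (p.2, p.1)) (Finsupp.mapDomain fMap (-a)) := by
      rw [show Finsupp.mapDomain (fMap (S := S)) (-a) = -(Finsupp.mapDomain fMap a) from
        map_neg (Finsupp.mapDomain.addMonoidHom fMap) a]
      show ((Finsupp.mapDomain fMap a).sum fun p x => Finsupp.single (p.2, p.1) (-x)) =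
        ((-(Finsupp.mapDomain fMap a)).sum fun p x => Finsupp.single (p.2, p.1) x)
      rw [Finsupp.sum_neg_index (fun p => Finsupp.single_zero _)]
    rw [h1, h2, piLGl_eq_mapDomain, ← Finsupp.mapDomain_comp, ← Finsupp.mapDomain_comp]
    congr 1
    funext p
    simp only [Function.comp_apply, fMap, Prod.mk.injEq]
    constructor <;> abel
  · -- injective + form preservation
    intro h0
    refine ⟨fun a b hab => Finsupp.mapDomain_injective (fMap_injective h0)
      (by rwa [← piLGl_eq_mapDomain, ← piLGl_eq_mapDomain]), ?_⟩
    intro a b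
    rw [piLGl_eq_mapDomain, piLGl_eq_mapDomain]
    show (Finsupp.mapDomain fMap a).sum (fun p x => (Finsupp.mapDomain fMap b).sum fun q y =>
      x * y * (if p.1 = q.2 ∧ p.2 = q.1 then 1 else 0)) = _
    rw [Finsupp.sum_mapDomain_index
      (fun p => by simp)
      (fun p x₁ x₂ => by
        rw [← Finsupp.sum_add]
        refine Finsupp.sum_congr fun q _ => ?_
        ring)]
    refine Finsupp.sum_congr fun p _ => ?_
    rw [Finsupp.sum_mapDomain_index
      (fun q => by simp)
      (fun q y₁ y₂ => by ring)]
    refine Finsupp.sum_congr fun q _ => ?_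
    congr 1
    unfold LformBasis
    rcases p with ⟨p1, p2⟩; rcases q with ⟨q1, q2⟩
    simp only [fMap]
    by_cases hc : p1 + q1 = 0 ∧ p2 = q2
    · erw [if_pos hc, if_pos]
      obtain ⟨hc1, hc2⟩ := hc
      have hp1 : p1 = -q1 := eq_neg_of_add_eq_zero_left hc1
      subst hc2; subst hp1
      constructor <;> abel
    · erw [if_neg hc, if_neg]
      intro hd
      obtain ⟨hd1, hd2⟩ := hd
      apply hc
      have h3 : (p2 - q2) + (p2 - q2) = 0 := by
        have := congrArg₂ (· + ·) hd1 hd2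
        linear_combination (norm := abel_nf) this
      have h4 : p2 = q2 := by
        have := h0 _ h3; rwa [sub_eq_zero] at this
      subst h4
      refine ⟨?_, rfl⟩
      linear_combination (norm := abel_nf) hd1
  · -- finite odd order
    intro hfin hodd
    have h0 : ∀ α : S, α + α = 0 → α = 0 := by
      intro α hα
      have hd2 : addOrderOf α ∣ 2 := addOrderOf_dvd_of_nsmul_eq_zero (by rw [two_nsmul]; exact hα)
      have hdc : addOrderOf α ∣ Nat.card S := addOrderOf_dvd_natCard α
      have hcop : Nat.Coprime 2 (Nat.card S) := Nat.coprime_two_left.mpr hodd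
      have h1 : addOrderOf α = 1 :=
        Nat.dvd_one.mp (hcop ▸ Nat.dvd_gcd hd2 hdc)
      exact AddMonoid.addOrderOf_eq_one_iff.mp h1
    have h2 : ∀ α : S, ∃ β : S, β + β = α := by
      have hinj : Function.Injective (fun β : S => β + β) := by
        intro x y hxy
        have : (x - y) + (x - y) = 0 := by
          simp only at hxy
          linear_combination (norm := abel_nf) hxy
        have := h0 _ this
        rwa [sub_eq_zero] at this
      have hsurj := Finite.surjective_of_injective hinj
      exact fun α => (hsurj α).imp fun β hβ => hβ
    exact hbij h0 h2
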